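/- (Vizing extension) For every proper partial (Δ+1)-edge-coloring φ of a finite simple graph G of maximum degree Δ and every uncolored edge e, there exists a connected subgraph H ⊆ G containing e, whose only φ-uncolored edge is e, and a proper partial coloring ψ with domain dom(φ) ∪ E(H) agreeing with φ outside E(H). In particular, every graph of maximum degree Δ admits a proper (Δ+1)-edge-coloring. -/

import Mathlib

open SimpleGraph

variable {V : Type*} [DecidableEq V]

/-- Two edges (as unordered pairs of vertices) are adjacent: distinct and sharing an endpoint. -/
def EdgeAdj (e f : Sym2 V) : Prop := e ≠ f ∧ ∃ v, v ∈ e ∧ v ∈ f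

/-- A proper partial edge-coloring of `G` with colors `{1,…,Δ+1}` (as `Fin (Δ+1)`):
its domain consists of edges of `G`, and adjacent colored edges get distinct colors. -/
def IsProperPartial (G : SimpleGraph V) (Δ : ℕ)
    (φ : Sym2 V → Option (Fin (Δ + 1))) : Prop :=
  (∀ e, (φ e).isSome → e ∈ G.edgeSet) ∧
  ∀ e f, EdgeAdj e f → (φ e).isSome → φ e ≠ φ f

/-- The set `M(φ,x)` of colors missing at `x`. -/
def missingColors (G : SimpleGraph V) (Δ : ℕ)
    (φ : Sym2 V → Option (Fin (Δ + 1))) (x : V) : Set (Fin (Δ + 1)) :=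
  {c | ∀ y, G.Adj x y → φ s(x, y) ≠ some c}

/-- `Shift φ e₀ e₁`: move the color of `e₁` to `e₀`, uncolor `e₁`, keep all else. -/
def Shift {α : Type*} (φ : Sym2 V → Option α) (e₀ e₁ : Sym2 V) :
    Sym2 V → Option α :=
  fun e => if e = e₀ then φ e₁ else if e = e₁ then none else φ e

/-- `(e₀, e₁)` is a `φ`-shiftable pair. -/
def ShiftablePair (G : SimpleGraph V) (Δ : ℕ) (φ : Sym2 V → Option (Fin (Δ + 1)))
    (e₀ e₁ : Sym2 V) : Prop :=
  EdgeAdj e₀ e₁ ∧ e₀ ∈ G.edgeSet ∧ φ e₀ = none ∧ (φ e₁).isSome ∧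
    IsProperPartial G Δ (Shift φ e₀ e₁)

/-- Shifting a coloring along a chain (list of edges). -/
def ShiftChain {α : Type*} : List (Sym2 V) → (Sym2 V → Option α) → (Sym2 V → Option α)
  | [], φ => φ
  | [_], φ => φ
  | e₀ :: e₁ :: rest, φ => ShiftChain (e₁ :: rest) (Shift φ e₀ e₁)

/-- A chain is `φ`-shiftable: each consecutive pair is shiftable w.r.t. the current coloring
(for a single-edge chain we require the edge to be an uncolored edge of `G`). -/
def ChainShiftable (G : SimpleGraph V) (Δ : ℕ) :
    List (Sym2 V) → (Sym2 V → Option (Fin (Δ + 1))) → Prop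
  | [], _ => True
  | [e], φ => φ e = none ∧ e ∈ G.edgeSet
  | e₀ :: e₁ :: rest, φ =>
      ShiftablePair G Δ φ e₀ e₁ ∧ ChainShiftable G Δ (e₁ :: rest) (Shift φ e₀ e₁)

/-- The spanning subgraph `G(φ, αβ)` of edges colored `α` or `β`. -/
def abSub (G : SimpleGraph V) (Δ : ℕ) (φ : Sym2 V → Option (Fin (Δ + 1)))
    (α β : Fin (Δ + 1)) : SimpleGraph V where
  Adj x y := G.Adj x y ∧ (φ s(x, y) = some α ∨ φ s(x, y) = some β)
  symm := by
    constructor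
    intro x y h
    refine ⟨h.1.symm, ?_⟩
    rw [Sym2.eq_swap]
    exact h.2
  loopless := ⟨fun x h => G.loopless.irrefl x h.1⟩

/-- A chain is `φ`-happy: it is `φ`-shiftable and its last edge is happy after shifting. -/
def ChainHappy (G : SimpleGraph V) (Δ : ℕ) (C : List (Sym2 V))
    (φ : Sym2 V → Option (Fin (Δ + 1))) : Prop :=
  ChainShiftable G Δ C φ ∧
    ∃ x y : V, C.getLast? = some s(x, y) ∧
      (missingColors G Δ (ShiftChain C φ) x ∩ missingColors G Δ (ShiftChain C φ) y).Nonempty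


/-! ### Auxiliary development for Vizing's theorem -/

set_option linter.unusedSectionVars false
set_option linter.unusedVariables false

section VizingAux

open Classical

variable {Δ : ℕ} {G : SimpleGraph V}

lemma edgeAdj_symm {e f : Sym2 V} (h : EdgeAdj e f) : EdgeAdj f e :=
  ⟨h.1.symm, h.2.imp fun v hv => ⟨hv.2, hv.1⟩⟩

lemma edgeAdj_left {x a b : V} (h : a ≠ b) : EdgeAdj s(x, a) s(x, b) :=
  ⟨fun hh => h (Sym2.congr_right.mp hh), x, Sym2.mem_mk_left x a, Sym2.mem_mk_left x b⟩

lemma mem_sym2_exists {v : V} {f : Sym2 V} (h : v ∈ f) : ∃ w, f = s(v, w) := by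
  induction f using Sym2.ind with
  | _ a b =>
    rcases Sym2.mem_iff.mp h with rfl | rfl
    · exact ⟨b, rfl⟩
    · exact ⟨a, Sym2.eq_swap⟩

lemma proper_inj_at {φ : Sym2 V → Option (Fin (Δ + 1))} (hφ : IsProperPartial G Δ φ)
    {x a b : V} (hne : a ≠ b) {c : Fin (Δ + 1)}
    (ha : φ s(x, a) = some c) (hb : φ s(x, b) = some c) : False := by
  have := hφ.2 s(x, a) s(x, b) (edgeAdj_left hne) (by simp [ha])
  rw [ha, hb] at this
  exact this rfl

lemma same_color_eq {φ : Sym2 V → Option (Fin (Δ + 1))} (hφ : IsProperPartial G Δ φ)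
    {v w₁ w₂ : V} {d : Fin (Δ + 1)}
    (h₁ : φ s(v, w₁) = some d) (h₂ : φ s(v, w₂) = some d) : w₁ = w₂ := by
  by_contra hne; exact proper_inj_at hφ hne h₁ h₂

lemma missing_nonempty [Fintype V] [DecidableRel G.Adj] (hΔ : G.maxDegree ≤ Δ)
    (φ : Sym2 V → Option (Fin (Δ + 1))) (v : V) :
    (missingColors G Δ φ v).Nonempty := by
  by_contra h
  rw [Set.not_nonempty_iff_eq_empty] at h
  have key : ∀ c : Fin (Δ + 1), ∃ w ∈ G.neighborFinset v, φ s(v, w) = some c := by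
    intro c
    have hc : c ∉ missingColors G Δ φ v := by rw [h]; exact Set.notMem_empty c
    simp only [missingColors, Set.mem_setOf_eq, not_forall] at hc
    obtain ⟨w, hw, hcc⟩ := hc
    exact ⟨w, by rwa [SimpleGraph.mem_neighborFinset], not_not.mp hcc⟩
  have hsub : (Finset.univ.image (some : Fin (Δ + 1) → Option (Fin (Δ + 1)))) ⊆
      (G.neighborFinset v).image (fun w => φ s(v, w)) := by
    intro o ho
    simp only [Finset.mem_image, Finset.mem_univ, true_and] at ho ⊢
    obtain ⟨c, rfl⟩ := ho
    obtain ⟨w, hw, hcc⟩ := key c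
    exact ⟨w, hw, hcc⟩
  have h1 := Finset.card_le_card hsub
  rw [Finset.card_image_of_injective _ (Option.some_injective _), Finset.card_univ,
    Fintype.card_fin] at h1
  have h2 := Finset.card_image_le (s := G.neighborFinset v) (f := fun w => φ s(v, w))
  have h3 := G.degree_le_maxDegree v
  rw [SimpleGraph.degree] at h3
  omega

/-- The subgraph of colored edges together with a designated edge `e`. -/
def colG (G : SimpleGraph V) {Δ : ℕ} (φ : Sym2 V → Option (Fin (Δ + 1))) (e : Sym2 V) :
    SimpleGraph V where
  Adj a b := G.Adj a b ∧ ((φ s(a, b)).isSome ∨ s(a, b) = e)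
  symm := by
    constructor
    intro a b h
    refine ⟨h.1.symm, ?_⟩
    rw [Sym2.eq_swap]
    exact h.2
  loopless := ⟨fun a h => G.loopless.irrefl a h.1⟩

lemma abSub_le_colG {φ : Sym2 V → Option (Fin (Δ + 1))} {α β : Fin (Δ + 1)} {e : Sym2 V} :
    abSub G Δ φ α β ≤ colG G φ e := by
  intro a b h
  exact ⟨h.1, Or.inl (by rcases h.2 with h2 | h2 <;> simp [h2])⟩

lemma abSub_deg1 {φ : Sym2 V → Option (Fin (Δ + 1))} {α β : Fin (Δ + 1)}
    (hφ : IsProperPartial G Δ φ) {v : V}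
    (h : α ∈ missingColors G Δ φ v ∨ β ∈ missingColors G Δ φ v) :
    ∀ w₁ w₂, (abSub G Δ φ α β).Adj v w₁ → (abSub G Δ φ α β).Adj v w₂ → w₁ = w₂ := by
  intro w₁ w₂ h₁ h₂
  by_contra hne
  rcases h with hm | hm
  · rcases h₁.2 with hc₁ | hc₁
    · exact hm w₁ h₁.1 hc₁
    · rcases h₂.2 with hc₂ | hc₂
      · exact hm w₂ h₂.1 hc₂
      · exact proper_inj_at hφ hne hc₁ hc₂
  · rcases h₁.2 with hc₁ | hc₁
    · rcases h₂.2 with hc₂ | hc₂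
      · exact proper_inj_at hφ hne hc₁ hc₂
      · exact hm w₂ h₂.1 hc₂
    · exact hm w₁ h₁.1 hc₁

lemma abSub_deg2 {φ : Sym2 V → Option (Fin (Δ + 1))} {α β : Fin (Δ + 1)}
    (hφ : IsProperPartial G Δ φ) :
    ∀ v w₁ w₂ w₃, (abSub G Δ φ α β).Adj v w₁ → (abSub G Δ φ α β).Adj v w₂ →
      (abSub G Δ φ α β).Adj v w₃ → w₁ = w₂ ∨ w₁ = w₃ ∨ w₂ = w₃ := by
  intro v w₁ w₂ w₃ h₁ h₂ h₃
  rcases h₁.2 with hc₁ | hc₁ <;> rcases h₂.2 with hc₂ | hc₂ <;> rcases h₃.2 with hc₃ | hc₃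
  · exact Or.inl (same_color_eq hφ hc₁ hc₂)
  · exact Or.inl (same_color_eq hφ hc₁ hc₂)
  · exact Or.inr (Or.inl (same_color_eq hφ hc₁ hc₃))
  · exact Or.inr (Or.inr (same_color_eq hφ hc₂ hc₃))
  · exact Or.inr (Or.inr (same_color_eq hφ hc₂ hc₃))
  · exact Or.inr (Or.inl (same_color_eq hφ hc₁ hc₃))
  · exact Or.inl (same_color_eq hφ hc₁ hc₂)
  · exact Or.inl (same_color_eq hφ hc₁ hc₂)


/-! #### Kempe-chain flips -/

/-- Swap the colors `α` and `β`. -/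
def swapc {Δ : ℕ} (α β : Fin (Δ + 1)) (c : Option (Fin (Δ + 1))) : Option (Fin (Δ + 1)) :=
  if c = some α then some β else if c = some β then some α else c

lemma swapc_some_alpha {α β : Fin (Δ + 1)} : swapc α β (some α) = some β := if_pos rfl

lemma swapc_some_beta {α β : Fin (Δ + 1)} : swapc α β (some β) = some α := by
  by_cases h : β = α
  · subst h; unfold swapc; simp
  · unfold swapc
    rw [if_neg (by simp [h]), if_pos rfl]

lemma swapc_isSome {α β : Fin (Δ + 1)} {c : Option (Fin (Δ + 1))} :
    (swapc α β c).isSome = c.isSome := by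
  unfold swapc
  split_ifs with h1 h2
  · simp [h1]
  · simp [h2]
  · rfl

lemma swapc_eq_beta {α β : Fin (Δ + 1)} {c : Option (Fin (Δ + 1))}
    (h : swapc α β c = some β) : c = some α := by
  unfold swapc at h
  split_ifs at h with h1 h2
  · exact h1
  · exact h2.trans h.symm
  · exact absurd h h2

lemma swapc_eq_alpha {α β : Fin (Δ + 1)} {c : Option (Fin (Δ + 1))}
    (h : swapc α β c = some α) : c = some β := by
  unfold swapc at h
  split_ifs at h with h1 h2
  · exact h1.trans h.symm
  · exact h2
  · exact absurd h h1

lemma swapc_ne_other {α β γ : Fin (Δ + 1)} {c : Option (Fin (Δ + 1))}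
    (hγα : γ ≠ α) (hγβ : γ ≠ β) (h : swapc α β c = some γ) : c = some γ := by
  unfold swapc at h
  split_ifs at h with h1 h2
  · exact absurd (Option.some_inj.mp h).symm hγβ
  · exact absurd (Option.some_inj.mp h).symm hγα
  · exact h

lemma swapc_invol {α β : Fin (Δ + 1)} {c : Option (Fin (Δ + 1))} :
    swapc α β (swapc α β c) = c := by
  by_cases h1 : c = some α
  · rw [h1, swapc_some_alpha, swapc_some_beta]
  · by_cases h2 : c = some β
    · rw [h2, swapc_some_beta, swapc_some_alpha]
    · have hc : swapc α β c = c := by unfold swapc; rw [if_neg h1, if_neg h2]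
      rw [hc, hc]

open Classical in
/-- Flip the colors `α`, `β` on the Kempe chain (connected `αβ`-component) through `z`. -/
noncomputable def kflip (G : SimpleGraph V) (Δ : ℕ) (φ : Sym2 V → Option (Fin (Δ + 1)))
    (α β : Fin (Δ + 1)) (z : V) : Sym2 V → Option (Fin (Δ + 1)) :=
  fun f => if f ∈ (abSub G Δ φ α β).edgeSet ∧ (∃ v ∈ f, (abSub G Δ φ α β).Reachable z v)
    then swapc α β (φ f) else φ f

variable {φ : Sym2 V → Option (Fin (Δ + 1))} {α β : Fin (Δ + 1)} {z : V}

lemma kflip_pos {f : Sym2 V}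
    (h : f ∈ (abSub G Δ φ α β).edgeSet ∧ ∃ v ∈ f, (abSub G Δ φ α β).Reachable z v) :
    kflip G Δ φ α β z f = swapc α β (φ f) := by
  unfold kflip; rw [if_pos h]

lemma kflip_neg {f : Sym2 V}
    (h : ¬ (f ∈ (abSub G Δ φ α β).edgeSet ∧ ∃ v ∈ f, (abSub G Δ φ α β).Reachable z v)) :
    kflip G Δ φ α β z f = φ f := by
  unfold kflip; rw [if_neg h]

lemma abSub_edge_color {f : Sym2 V} (h : f ∈ (abSub G Δ φ α β).edgeSet) :
    φ f = some α ∨ φ f = some β := by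
  induction f using Sym2.ind with
  | _ a b => exact ((abSub G Δ φ α β).mem_edgeSet.mp h).2

lemma kflip_closure {f : Sym2 V} (hE : f ∈ (abSub G Δ φ α β).edgeSet)
    (hr : ∃ v ∈ f, (abSub G Δ φ α β).Reachable z v) :
    ∀ w ∈ f, (abSub G Δ φ α β).Reachable z w := by
  induction f using Sym2.ind with
  | _ a b =>
    obtain ⟨v, hv, hvr⟩ := hr
    intro w hw
    have hadj : (abSub G Δ φ α β).Adj a b := (abSub G Δ φ α β).mem_edgeSet.mp hE
    rcases Sym2.mem_iff.mp hv with rfl | rfl <;> rcases Sym2.mem_iff.mp hw with rfl | rfl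
    · exact hvr
    · exact hvr.trans hadj.reachable
    · exact hvr.trans hadj.symm.reachable
    · exact hvr

lemma kflip_isSome (f : Sym2 V) : (kflip G Δ φ α β z f).isSome = (φ f).isSome := by
  unfold kflip
  split_ifs with h
  · exact swapc_isSome
  · rfl

lemma kflip_none {f : Sym2 V} (h : φ f = none) : kflip G Δ φ α β z f = none := by
  have := kflip_isSome (G := G) (φ := φ) (z := z) (α := α) (β := β) f
  rw [h] at this
  exact Option.not_isSome_iff_eq_none.mp (by rw [this]; simp)

lemma kflip_unchanged_edge {f : Sym2 V} (h1 : φ f ≠ some α) (h2 : φ f ≠ some β) :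
    kflip G Δ φ α β z f = φ f := by
  apply kflip_neg
  rintro ⟨hE, -⟩
  rcases abSub_edge_color hE with h | h
  · exact h1 h
  · exact h2 h

lemma kflip_diff {f : Sym2 V} (h : kflip G Δ φ α β z f ≠ φ f) :
    f ∈ (abSub G Δ φ α β).edgeSet ∧ ∃ v ∈ f, (abSub G Δ φ α β).Reachable z v := by
  by_cases P : f ∈ (abSub G Δ φ α β).edgeSet ∧ ∃ v ∈ f, (abSub G Δ φ α β).Reachable z v
  · exact P
  · exact absurd (kflip_neg P) h

lemma kflip_proper (hφ : IsProperPartial G Δ φ) : IsProperPartial G Δ (kflip G Δ φ α β z) := by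
  constructor
  · intro f hf
    rw [kflip_isSome] at hf
    exact hφ.1 f hf
  · have aux : ∀ f g, EdgeAdj f g →
        (f ∈ (abSub G Δ φ α β).edgeSet ∧ ∃ v ∈ f, (abSub G Δ φ α β).Reachable z v) →
        ¬ (g ∈ (abSub G Δ φ α β).edgeSet ∧ ∃ v ∈ g, (abSub G Δ φ α β).Reachable z v) →
        kflip G Δ φ α β z f ≠ kflip G Δ φ α β z g := by
      intro f g hadj Pf Pg heq
      rw [kflip_pos Pf, kflip_neg Pg] at heq
      obtain ⟨hne, v, hvf, hvg⟩ := hadj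
      obtain ⟨w, rfl⟩ := mem_sym2_exists hvg
      have hcol : φ s(v, w) = some β ∨ φ s(v, w) = some α := by
        rcases abSub_edge_color Pf.1 with h | h
        · rw [h, swapc_some_alpha] at heq; exact Or.inl heq.symm
        · rw [h, swapc_some_beta] at heq; exact Or.inr heq.symm
      have hvw : G.Adj v w := by
        apply G.mem_edgeSet.mp
        apply hφ.1
        rcases hcol with h | h <;> simp [h]
      have hAvw : (abSub G Δ φ α β).Adj v w := ⟨hvw, hcol.symm⟩
      exact Pg ⟨(abSub G Δ φ α β).mem_edgeSet.mpr hAvw,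
        v, Sym2.mem_mk_left v w, kflip_closure Pf.1 Pf.2 v hvf⟩
    intro f g hadj hs heq
    by_cases Pf : f ∈ (abSub G Δ φ α β).edgeSet ∧ ∃ v ∈ f, (abSub G Δ φ α β).Reachable z v <;>
      by_cases Pg : g ∈ (abSub G Δ φ α β).edgeSet ∧ ∃ v ∈ g, (abSub G Δ φ α β).Reachable z v
    · rw [kflip_pos Pf, kflip_pos Pg] at heq
      have hfg : φ f = φ g := by
        have := congrArg (swapc α β) heq
        rwa [swapc_invol, swapc_invol] at this
      rw [kflip_isSome] at hs
      exact hφ.2 f g hadj hs (by rw [hfg])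
    · exact aux f g hadj Pf Pg heq
    · exact aux g f (edgeAdj_symm hadj) Pg Pf heq.symm
    · rw [kflip_neg Pf, kflip_neg Pg] at heq
      rw [kflip_isSome] at hs
      exact hφ.2 f g hadj hs heq

lemma kflip_missing_ab {v : V} (hr : (abSub G Δ φ α β).Reachable z v)
    (h : α ∈ missingColors G Δ φ v) : β ∈ missingColors G Δ (kflip G Δ φ α β z) v := by
  intro w hw heq
  by_cases P : s(v, w) ∈ (abSub G Δ φ α β).edgeSet ∧
      ∃ u ∈ s(v, w), (abSub G Δ φ α β).Reachable z u
  · rw [kflip_pos P] at heq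
    exact h w hw (swapc_eq_beta heq)
  · rw [kflip_neg P] at heq
    exact P ⟨(abSub G Δ φ α β).mem_edgeSet.mpr ⟨hw, Or.inr heq⟩, v, Sym2.mem_mk_left v w, hr⟩

lemma kflip_missing_ba {v : V} (hr : (abSub G Δ φ α β).Reachable z v)
    (h : β ∈ missingColors G Δ φ v) : α ∈ missingColors G Δ (kflip G Δ φ α β z) v := by
  intro w hw heq
  by_cases P : s(v, w) ∈ (abSub G Δ φ α β).edgeSet ∧
      ∃ u ∈ s(v, w), (abSub G Δ φ α β).Reachable z u
  · rw [kflip_pos P] at heq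
    exact h w hw (swapc_eq_alpha heq)
  · rw [kflip_neg P] at heq
    exact P ⟨(abSub G Δ φ α β).mem_edgeSet.mpr ⟨hw, Or.inl heq⟩, v, Sym2.mem_mk_left v w, hr⟩

lemma kflip_missing_far {v : V} (hr : ¬ (abSub G Δ φ α β).Reachable z v)
    {c : Fin (Δ + 1)} (h : c ∈ missingColors G Δ φ v) :
    c ∈ missingColors G Δ (kflip G Δ φ α β z) v := by
  intro w hw heq
  by_cases P : s(v, w) ∈ (abSub G Δ φ α β).edgeSet ∧
      ∃ u ∈ s(v, w), (abSub G Δ φ α β).Reachable z u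
  · exact hr (kflip_closure P.1 P.2 v (Sym2.mem_mk_left v w))
  · rw [kflip_neg P] at heq
    exact h w hw heq

lemma kflip_missing_other {v : V} {γ : Fin (Δ + 1)} (hγα : γ ≠ α) (hγβ : γ ≠ β)
    (h : γ ∈ missingColors G Δ φ v) : γ ∈ missingColors G Δ (kflip G Δ φ α β z) v := by
  intro w hw heq
  by_cases P : s(v, w) ∈ (abSub G Δ φ α β).edgeSet ∧
      ∃ u ∈ s(v, w), (abSub G Δ φ α β).Reachable z u
  · rw [kflip_pos P] at heq
    exact h w hw (swapc_ne_other hγα hγβ heq)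
  · rw [kflip_neg P] at heq
    exact h w hw heq


/-! #### Structure of graphs of maximum degree two -/

lemma prefix_lemma (A : SimpleGraph V)
    (hd2 : ∀ v w₁ w₂ w₃, A.Adj v w₁ → A.Adj v w₂ → A.Adj v w₃ → w₁ = w₂ ∨ w₁ = w₃ ∨ w₂ = w₃) :
    ∀ (n : ℕ) {a v w : V} (p : A.Walk a v) (q : A.Walk a w) (exc : V → Prop),
      p.length + q.length ≤ n → p.IsPath → q.IsPath →
      (∀ z, exc z → z ∉ p.support) → (∀ z, exc z → z ∉ q.support) →
      (∀ w₁ w₂, A.Adj a w₁ → ¬ exc w₁ → A.Adj a w₂ → ¬ exc w₂ → w₁ = w₂) →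
      (∀ z ∈ p.support, z ∈ q.support) ∨ (∀ z ∈ q.support, z ∈ p.support) := by
  intro n
  induction n with
  | zero =>
    intro a v w p q exc hlen _ _ _ _ _
    cases p with
    | nil =>
      left; intro z hz
      rw [SimpleGraph.Walk.support_nil, List.mem_singleton] at hz
      subst hz; exact q.start_mem_support
    | cons h p' => simp [SimpleGraph.Walk.length_cons] at hlen
  | succ n ih =>
    intro a v w p q exc hlen hp hq hep heq havail
    cases p with
    | nil =>
      left; intro z hz
      rw [SimpleGraph.Walk.support_nil, List.mem_singleton] at hz
      subst hz; exact q.start_mem_support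
    | cons hab p' =>
      rename_i b
      cases q with
      | nil =>
        right; intro z hz
        rw [SimpleGraph.Walk.support_nil, List.mem_singleton] at hz
        subst hz; exact (SimpleGraph.Walk.cons hab p').start_mem_support
      | cons hac q' =>
        rename_i c
        have hbmem : b ∈ (SimpleGraph.Walk.cons hab p').support := by
          rw [SimpleGraph.Walk.support_cons]
          exact List.mem_cons_of_mem _ p'.start_mem_support
        have hcmem : c ∈ (SimpleGraph.Walk.cons hac q').support := by
          rw [SimpleGraph.Walk.support_cons]
          exact List.mem_cons_of_mem _ q'.start_mem_support
        have hbc : b = c :=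
          havail b c hab (fun he => hep b he hbmem) hac (fun he => heq c he hcmem)
        subst hbc
        have hp' := (SimpleGraph.Walk.cons_isPath_iff hab p').mp hp
        have hq' := (SimpleGraph.Walk.cons_isPath_iff hac q').mp hq
        have hlen' : p'.length + q'.length ≤ n := by
          simp only [SimpleGraph.Walk.length_cons] at hlen; omega
        have key := ih p' q' (fun z => z = a) hlen' hp'.1 hq'.1
          (fun z hz => hz ▸ hp'.2) (fun z hz => hz ▸ hq'.2)
          (fun w₁ w₂ h₁ hne₁ h₂ hne₂ => by
            rcases hd2 b w₁ w₂ a h₁ h₂ hab.symm with h | h | h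
            · exact h
            · exact absurd h hne₁
            · exact absurd h hne₂)
        rcases key with key | key
        · left; intro z hz
          rw [SimpleGraph.Walk.support_cons, List.mem_cons] at hz
          rcases hz with rfl | hz
          · exact (SimpleGraph.Walk.cons hac q').start_mem_support
          · rw [SimpleGraph.Walk.support_cons]
            exact List.mem_cons_of_mem _ (key z hz)
        · right; intro z hz
          rw [SimpleGraph.Walk.support_cons, List.mem_cons] at hz
          rcases hz with rfl | hz
          · exact (SimpleGraph.Walk.cons hab p').start_mem_support
          · rw [SimpleGraph.Walk.support_cons]
            exact List.mem_cons_of_mem _ (key z hz)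

lemma interior_two_nbrs (A : SimpleGraph V) :
    ∀ {a b : V} (q : A.Walk a b), q.IsPath → ∀ w ∈ q.support, w ≠ a → w ≠ b →
      ∃ t₁ t₂, t₁ ≠ t₂ ∧ A.Adj w t₁ ∧ A.Adj w t₂ := by
  intro a b q
  induction q with
  | nil =>
    intro _ w hw hwa _
    rw [SimpleGraph.Walk.support_nil, List.mem_singleton] at hw
    exact absurd hw hwa
  | cons had q' ih =>
    rename_i u d b'
    intro hp w hw hwa hwb
    rw [SimpleGraph.Walk.support_cons, List.mem_cons] at hw
    rcases hw with rfl | hw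
    · exact absurd rfl hwa
    · have hq' := (SimpleGraph.Walk.cons_isPath_iff had q').mp hp
      by_cases hwd : w = d
      · subst hwd
        cases q' with
        | nil => exact absurd rfl hwb
        | cons hde q'' =>
          rename_i e
          refine ⟨u, e, ?_, had.symm, hde⟩
          intro hue
          apply hq'.2
          rw [SimpleGraph.Walk.support_cons, hue]
          exact List.mem_cons_of_mem _ q''.start_mem_support
      · exact ih hq'.1 w hw hwd hwb

lemma three_ends_false (A : SimpleGraph V)
    (hd2 : ∀ v w₁ w₂ w₃, A.Adj v w₁ → A.Adj v w₂ → A.Adj v w₃ → w₁ = w₂ ∨ w₁ = w₃ ∨ w₂ = w₃)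
    {x u v : V}
    (hx : ∀ w₁ w₂, A.Adj x w₁ → A.Adj x w₂ → w₁ = w₂)
    (hu : ∀ w₁ w₂, A.Adj u w₁ → A.Adj u w₂ → w₁ = w₂)
    (hv : ∀ w₁ w₂, A.Adj v w₁ → A.Adj v w₂ → w₁ = w₂)
    (hxu : x ≠ u) (hxv : x ≠ v) (huv : u ≠ v)
    (ru : A.Reachable x u) (rv : A.Reachable x v) : False := by
  obtain ⟨pu⟩ := ru
  obtain ⟨pv⟩ := rv
  have hpp := pu.bypass_isPath
  have hqq := pv.bypass_isPath
  rcases prefix_lemma A hd2 (pu.bypass.length + pv.bypass.length) pu.bypass pv.bypass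
      (fun _ => False) le_rfl hpp hqq (fun z hz => hz.elim) (fun z hz => hz.elim)
      (fun w₁ w₂ h₁ _ h₂ _ => hx w₁ w₂ h₁ h₂) with h | h
  · have hm : u ∈ pv.bypass.support := h u pu.bypass.end_mem_support
    obtain ⟨t₁, t₂, hne, h₁, h₂⟩ := interior_two_nbrs A pv.bypass hqq u hm hxu.symm huv
    exact hne (hu t₁ t₂ h₁ h₂)
  · have hm : v ∈ pu.bypass.support := h v pv.bypass.end_mem_support
    obtain ⟨t₁, t₂, hne, h₁, h₂⟩ := interior_two_nbrs A pu.bypass hpp v hm hxv.symm huv.symm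
    exact hne (hv t₁ t₂ h₁ h₂)


/-! #### Fans and fan rotation -/

/-- A Vizing fan at `x`: distinct neighbors `Y 0, …, Y k`, with `s(x, Y 0)` uncolored and
the color of `s(x, Y i)` missing at `Y (i-1)`. -/
def IsFan (G : SimpleGraph V) (Δ : ℕ) (φ : Sym2 V → Option (Fin (Δ + 1))) (x : V)
    (Y : ℕ → V) (c : ℕ → Fin (Δ + 1)) (k : ℕ) : Prop :=
  (∀ i, i ≤ k → G.Adj x (Y i)) ∧
  (∀ i, i ≤ k → ∀ j, j ≤ k → Y i = Y j → i = j) ∧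
  φ s(x, Y 0) = none ∧
  (∀ i, 1 ≤ i → i ≤ k → φ s(x, Y i) = some (c i)) ∧
  (∀ i, 1 ≤ i → i ≤ k → c i ∈ missingColors G Δ φ (Y (i - 1)))

open Classical in
/-- Rotate the fan: each fan edge receives the color of the next one; the last is uncolored. -/
noncomputable def rotFan {Δ : ℕ} (φ : Sym2 V → Option (Fin (Δ + 1))) (x : V) (Y : ℕ → V)
    (c : ℕ → Fin (Δ + 1)) (t : ℕ) : Sym2 V → Option (Fin (Δ + 1)) :=
  fun f => if h : ∃ i, i ≤ t ∧ f = s(x, Y i) then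
    (if Nat.find h = t then none else some (c (Nat.find h + 1))) else φ f

lemma rotFan_val {φ : Sym2 V → Option (Fin (Δ + 1))} {x : V} {Y : ℕ → V}
    {c : ℕ → Fin (Δ + 1)} {t : ℕ}
    (hinj : ∀ i, i ≤ t → ∀ j, j ≤ t → Y i = Y j → i = j) {i : ℕ} (hi : i ≤ t) :
    rotFan φ x Y c t s(x, Y i) = if i = t then none else some (c (i + 1)) := by
  have h : ∃ j, j ≤ t ∧ s(x, Y i) = s(x, Y j) := ⟨i, hi, rfl⟩
  unfold rotFan
  rw [dif_pos h]
  have hspec := Nat.find_spec h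
  have hfi : Nat.find h = i := hinj _ hspec.1 i hi (Sym2.congr_right.mp hspec.2).symm
  rw [hfi]

lemma rotFan_off {φ : Sym2 V → Option (Fin (Δ + 1))} {x : V} {Y : ℕ → V}
    {c : ℕ → Fin (Δ + 1)} {t : ℕ} {f : Sym2 V}
    (h : ∀ i, i ≤ t → f ≠ s(x, Y i)) : rotFan φ x Y c t f = φ f := by
  unfold rotFan
  rw [dif_neg]
  rintro ⟨i, hi, he⟩
  exact h i hi he

/-- Rotate a fan and color its last edge with a color `β` missing at both `x` and `Y t`. -/
lemma rotate_extend {φ : Sym2 V → Option (Fin (Δ + 1))} (hφ : IsProperPartial G Δ φ)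
    {x : V} {Y : ℕ → V} {c : ℕ → Fin (Δ + 1)} {t : ℕ} (hfan : IsFan G Δ φ x Y c t)
    {β : Fin (Δ + 1)} (hβx : β ∈ missingColors G Δ φ x)
    (hβt : β ∈ missingColors G Δ φ (Y t)) :
    ∃ ψ, IsProperPartial G Δ ψ ∧
      (∀ f, (ψ f).isSome ↔ ((φ f).isSome ∨ f = s(x, Y 0))) ∧
      (∀ f, ψ f ≠ φ f → ∃ i, i ≤ t ∧ f = s(x, Y i)) := by
  obtain ⟨hadjY, hinj, h0, hc, hmiss⟩ := hfan
  set ρ := rotFan φ x Y c t with hρdef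
  have hYx : ∀ i, i ≤ t → Y i ≠ x := fun i hi => (hadjY i hi).ne'
  have hval : ∀ i, i ≤ t → ρ s(x, Y i) = if i = t then none else some (c (i + 1)) :=
    fun i hi => rotFan_val hinj hi
  have hoff : ∀ f, (∀ i, i ≤ t → f ≠ s(x, Y i)) → ρ f = φ f := fun f h => rotFan_off h
  have hcinj : ∀ i j, 1 ≤ i → i ≤ t → 1 ≤ j → j ≤ t → c i = c j → i = j := by
    intro i j h1i hit h1j hjt hcc
    by_contra hne
    have hYne : Y i ≠ Y j := fun he => hne (hinj i hit j hjt he)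
    exact proper_inj_at hφ hYne (hc i h1i hit) (hcc ▸ hc j h1j hjt)
  have hmx : ∀ w, G.Adj x w → ρ s(x, w) ≠ some β := by
    intro w hw heq
    by_cases hf : ∃ i, i ≤ t ∧ s(x, w) = s(x, Y i)
    · obtain ⟨i, hi, he⟩ := hf
      rw [he, hval i hi] at heq
      split_ifs at heq with hit
      have hne := hβx (Y (i + 1)) (hadjY (i + 1) (by omega))
      apply hne
      rw [hc (i + 1) (by omega) (by omega)]
      exact heq
    · push_neg at hf
      rw [hoff _ hf] at heq
      exact hβx w hw heq
  have hmt : ∀ w, G.Adj (Y t) w → ρ s(Y t, w) ≠ some β := by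
    intro w hw heq
    by_cases hf : ∃ i, i ≤ t ∧ s(Y t, w) = s(x, Y i)
    · obtain ⟨i, hi, he⟩ := hf
      have hx_mem : x ∈ s(Y t, w) := by rw [he]; exact Sym2.mem_mk_left x (Y i)
      rcases Sym2.mem_iff.mp hx_mem with hx1 | hx2
      · exact hYx t le_rfl hx1.symm
      · subst hx2
        rw [Sym2.eq_swap, hval t le_rfl, if_pos rfl] at heq
        cases heq
    · push_neg at hf
      rw [hoff _ hf] at heq
      exact hβt w hw heq
  have hρ1 : ∀ f, (ρ f).isSome → f ∈ G.edgeSet := by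
    intro f hf
    by_cases hfn : ∃ i, i ≤ t ∧ f = s(x, Y i)
    · obtain ⟨i, hi, rfl⟩ := hfn
      exact G.mem_edgeSet.mpr (hadjY i hi)
    · push_neg at hfn
      rw [hoff f hfn] at hf
      exact hφ.1 f hf
  have haux : ∀ i, i < t → ∀ g, (∀ j, j ≤ t → g ≠ s(x, Y j)) → EdgeAdj s(x, Y i) g →
      ρ g ≠ some (c (i + 1)) := by
    intro i hit g hg hadj heq
    rw [hoff g hg] at heq
    obtain ⟨hne, v, hvf, hvg⟩ := hadj
    obtain ⟨w, rfl⟩ := mem_sym2_exists hvg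
    have hgadj : G.Adj v w := G.mem_edgeSet.mp (hφ.1 _ (by rw [heq]; rfl))
    rcases Sym2.mem_iff.mp hvf with rfl | rfl
    · have hwY : w ≠ Y (i + 1) := by
        intro hwe
        exact hg (i + 1) (by omega) (by rw [hwe])
      exact proper_inj_at hφ hwY heq (hc (i + 1) (by omega) (by omega))
    · have hm := hmiss (i + 1) (by omega) (by omega)
      rw [Nat.add_sub_cancel] at hm
      exact hm w hgadj heq
  have hρ2 : ∀ f g, EdgeAdj f g → (ρ f).isSome → ρ f ≠ ρ g := by
    intro f g hadj hs heq
    by_cases hf : ∃ i, i ≤ t ∧ f = s(x, Y i) <;> by_cases hg : ∃ j, j ≤ t ∧ g = s(x, Y j)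
    · obtain ⟨i, hi, rfl⟩ := hf
      obtain ⟨j, hj, rfl⟩ := hg
      by_cases hit : i = t
      · rw [hval i hi, if_pos hit] at hs; simp at hs
      · by_cases hjt : j = t
        · rw [hval i hi, if_neg hit, hval j hj, if_pos hjt] at heq
          cases heq
        · rw [hval i hi, if_neg hit, hval j hj, if_neg hjt] at heq
          have hij : i = j := by
            have := hcinj (i + 1) (j + 1) (by omega) (by omega) (by omega) (by omega)
              (Option.some_inj.mp heq)
            omega
          exact hadj.1 (by rw [hij])
    · obtain ⟨i, hi, rfl⟩ := hf
      by_cases hit : i = t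
      · rw [hval i hi, if_pos hit] at hs; simp at hs
      · push_neg at hg
        rw [hval i hi, if_neg hit] at heq
        exact haux i (by omega) g hg hadj heq.symm
    · obtain ⟨j, hj, rfl⟩ := hg
      push_neg at hf
      by_cases hjt : j = t
      · rw [hval j hj, if_pos hjt] at heq
        rw [heq] at hs; simp at hs
      · rw [hval j hj, if_neg hjt] at heq
        exact haux j (by omega) f hf (edgeAdj_symm hadj) heq
    · push_neg at hf hg
      rw [hoff f hf] at hs heq
      rw [hoff g hg] at heq
      exact hφ.2 f g hadj hs heq
  refine ⟨fun f => if f = s(x, Y t) then some β else ρ f, ⟨?_, ?_⟩, ?_, ?_⟩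
  · intro f hf
    by_cases he : f = s(x, Y t)
    · rw [he]
      exact G.mem_edgeSet.mpr (hadjY t le_rfl)
    · simp only [if_neg he] at hf
      exact hρ1 f hf
  · intro f g hadj hs heq
    simp only at hs heq
    by_cases hf : f = s(x, Y t) <;> by_cases hg : g = s(x, Y t)
    · exact hadj.1 (hf.trans hg.symm)
    · rw [if_pos hf, if_neg hg] at heq
      obtain ⟨hne, v, hvf, hvg⟩ := hadj
      obtain ⟨w, rfl⟩ := mem_sym2_exists hvg
      have hgadj : G.Adj v w := G.mem_edgeSet.mp (hρ1 _ (by rw [← heq]; rfl))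
      subst hf
      rcases Sym2.mem_iff.mp hvf with rfl | rfl
      · exact hmx w hgadj heq.symm
      · exact hmt w hgadj heq.symm
    · rw [if_neg hf] at hs heq
      rw [if_pos hg] at heq
      obtain ⟨hne, v, hvf, hvg⟩ := hadj
      obtain ⟨w, rfl⟩ := mem_sym2_exists hvf
      have hfadj : G.Adj v w := G.mem_edgeSet.mp (hρ1 _ hs)
      subst hg
      rcases Sym2.mem_iff.mp hvg with rfl | rfl
      · exact hmx w hfadj heq
      · exact hmt w hfadj heq
    · rw [if_neg hf] at hs heq
      rw [if_neg hg] at heq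
      exact hρ2 f g hadj hs heq
  · intro f
    simp only
    by_cases hf : f = s(x, Y t)
    · rw [if_pos hf]
      constructor
      · intro _
        by_cases ht0 : t = 0
        · exact Or.inr (by rw [hf, ht0])
        · refine Or.inl ?_
          rw [hf, hc t (by omega) le_rfl]
          rfl
      · intro _; rfl
    · rw [if_neg hf]
      by_cases hfn : ∃ i, i ≤ t ∧ f = s(x, Y i)
      · obtain ⟨i, hi, rfl⟩ := hfn
        have hit : i ≠ t := fun h => hf (by rw [h])
        rw [hval i hi, if_neg hit]
        constructor
        · intro _
          by_cases hi0 : i = 0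
          · exact Or.inr (by rw [hi0])
          · refine Or.inl ?_
            rw [hc i (by omega) hi]
            rfl
        · intro _; rfl
      · push_neg at hfn
        rw [hoff f hfn]
        constructor
        · exact Or.inl
        · rintro (h | h)
          · exact h
          · exact absurd h (hfn 0 (Nat.zero_le t))
  · intro f hne
    simp only at hne
    by_cases hf : f = s(x, Y t)
    · exact ⟨t, le_rfl, hf⟩
    · by_cases hfn : ∃ i, i ≤ t ∧ f = s(x, Y i)
      · exact hfn
      · push_neg at hfn
        rw [if_neg hf, hoff f hfn] at hne
        exact absurd rfl hne


/-! #### Maximal fans -/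

lemma exists_max_fan [Fintype V] (G : SimpleGraph V) (Δ : ℕ)
    (φ : Sym2 V → Option (Fin (Δ + 1))) (x y : V) (hadj : G.Adj x y)
    (hunc : φ s(x, y) = none) :
    ∃ Y c k, IsFan G Δ φ x Y c k ∧ Y 0 = y ∧
      (∀ z (β : Fin (Δ + 1)), G.Adj x z → φ s(x, z) = some β →
        β ∈ missingColors G Δ φ (Y k) → ∃ j, 1 ≤ j ∧ j ≤ k ∧ z = Y j) := by
  classical
  set P : ℕ → Prop := fun k => ∃ Y c, IsFan G Δ φ x Y c k ∧ Y 0 = y with hP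
  have hP0 : P 0 := by
    refine ⟨fun _ => y, fun _ => 0, ⟨?_, ?_, ?_, ?_, ?_⟩, rfl⟩
    · intro i _; exact hadj
    · intro i hi j hj _; omega
    · exact hunc
    · intro i h1 h2; omega
    · intro i h1 h2; omega
  have hbound : ∀ m, P m → m < Fintype.card V := by
    intro m ⟨Y, c, hfan, _⟩
    have hinj : Function.Injective (fun i : Fin (m + 1) => Y i) := by
      intro i j hij
      exact Fin.ext (hfan.2.1 i (by omega) j (by omega) hij)
    have := Fintype.card_le_of_injective _ hinj
    simpa using this
  set k := Nat.findGreatest P (Fintype.card V) with hk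
  have hPk : P k := Nat.findGreatest_spec (Nat.zero_le _) hP0
  have hnot : ¬ P (k + 1) := by
    by_cases hle : k + 1 ≤ Fintype.card V
    · exact Nat.findGreatest_is_greatest (Nat.lt_succ_self k) hle
    · intro hPk1
      exact hle (le_of_lt (hbound (k + 1) hPk1))
  obtain ⟨Y, c, hfan, hY0⟩ := hPk
  refine ⟨Y, c, k, hfan, hY0, ?_⟩
  intro z β hz hcz hmz
  by_contra hno
  push_neg at hno
  have hzY : ∀ j, j ≤ k → z ≠ Y j := by
    intro j hj he
    rcases Nat.eq_zero_or_pos j with rfl | hj1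
    · have h00 : φ s(x, y) = none := by rw [← hY0]; exact hfan.2.2.1
      rw [he, hY0, h00] at hcz
      cases hcz
    · exact (hno j hj1 hj) he
  apply hnot
  refine ⟨fun i => if i = k + 1 then z else Y i, fun i => if i = k + 1 then β else c i,
    ⟨?_, ?_, ?_, ?_, ?_⟩, ?_⟩
  · intro i hi
    by_cases h : i = k + 1
    · simpa [h] using hz
    · simpa [h] using hfan.1 i (by omega)
  · intro i hi j hj hij
    simp only at hij
    by_cases h1 : i = k + 1 <;> by_cases h2 : j = k + 1
    · omega
    · rw [if_pos h1, if_neg h2] at hij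
      exact absurd hij.symm (hzY j (by omega)).symm
    · rw [if_neg h1, if_pos h2] at hij
      exact absurd hij (hzY i (by omega)).symm
    · rw [if_neg h1, if_neg h2] at hij
      have := hfan.2.1 i (by omega) j (by omega) hij
      omega
  · simpa using hfan.2.2.1
  · intro i h1 h2
    by_cases h : i = k + 1
    · simpa [h] using hcz
    · simpa [h] using hfan.2.2.2.1 i h1 (by omega)
  · intro i h1 h2
    by_cases h : i = k + 1
    · have : i - 1 = k := by omega
      simpa [h, this] using hmz
    · have : i - 1 ≠ k + 1 := by omega
      simpa [h, this] using hfan.2.2.2.2 i h1 (by omega)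
  · simp [hY0]

/-! #### The Vizing step -/

lemma vizing_step [Fintype V] (G : SimpleGraph V) [DecidableRel G.Adj] (Δ : ℕ)
    (hΔ : G.maxDegree ≤ Δ) (φ : Sym2 V → Option (Fin (Δ + 1)))
    (hφ : IsProperPartial G Δ φ)
    (x y : V) (hadj : G.Adj x y) (hunc : φ s(x, y) = none) :
    ∃ ψ, IsProperPartial G Δ ψ ∧
      (∀ f, (ψ f).isSome ↔ ((φ f).isSome ∨ f = s(x, y))) ∧
      (∀ f, ψ f ≠ φ f → ∃ a b, f = s(a, b) ∧ (colG G φ s(x, y)).Adj a b ∧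
        (colG G φ s(x, y)).Reachable x a ∧ (colG G φ s(x, y)).Reachable x b) := by
  classical
  obtain ⟨α, hαx⟩ := missing_nonempty hΔ φ x
  obtain ⟨Y, c, k, hfan, hY0, hmax⟩ := exists_max_fan G Δ φ x y hadj hunc
  obtain ⟨β, hβk⟩ := missing_nonempty hΔ φ (Y k)
  have main : ∀ (φ₁ : Sym2 V → Option (Fin (Δ + 1))) (c₁ : ℕ → Fin (Δ + 1)) (t : ℕ),
      IsProperPartial G Δ φ₁ → IsFan G Δ φ₁ x Y c₁ t →
      β ∈ missingColors G Δ φ₁ x → β ∈ missingColors G Δ φ₁ (Y t) →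
      (∀ f, (φ₁ f).isSome = (φ f).isSome) →
      (∀ f, φ₁ f ≠ φ f → ∃ a b, f = s(a, b) ∧ (colG G φ s(x, y)).Adj a b ∧
        (colG G φ s(x, y)).Reachable x a ∧ (colG G φ s(x, y)).Reachable x b) →
      ∃ ψ, IsProperPartial G Δ ψ ∧
        (∀ f, (ψ f).isSome ↔ ((φ f).isSome ∨ f = s(x, y))) ∧
        (∀ f, ψ f ≠ φ f → ∃ a b, f = s(a, b) ∧ (colG G φ s(x, y)).Adj a b ∧
          (colG G φ s(x, y)).Reachable x a ∧ (colG G φ s(x, y)).Reachable x b) := by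
    intro φ₁ c₁ t hφ₁ hfan₁ hβx₁ hβt₁ hsome hdiff₁
    obtain ⟨ψ, hψ, hdomψ, hdiffψ⟩ := rotate_extend hφ₁ hfan₁ hβx₁ hβt₁
    refine ⟨ψ, hψ, ?_, ?_⟩
    · intro f
      have h := hdomψ f
      rw [hsome f, hY0] at h
      exact h
    · intro f hne
      by_cases h1 : φ₁ f = φ f
      · obtain ⟨i, hit, rfl⟩ := hdiffψ f (fun h => hne (h.trans h1))
        have hAdj : (colG G φ s(x, y)).Adj x (Y i) := by
          refine ⟨hfan₁.1 i hit, ?_⟩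
          by_cases hi0 : i = 0
          · exact Or.inr (by rw [hi0, hY0])
          · refine Or.inl ?_
            rw [← hsome, hfan₁.2.2.2.1 i (by omega) hit]
            rfl
        exact ⟨x, Y i, rfl, hAdj, SimpleGraph.Reachable.refl x, hAdj.reachable⟩
      · exact hdiff₁ f h1
  by_cases hβx : β ∈ missingColors G Δ φ x
  · exact main φ c k hφ hfan hβx hβk (fun f => rfl) (fun f h => absurd rfl h)
  · have hex : ∃ z, G.Adj x z ∧ φ s(x, z) = some β := by
      by_contra hno
      push_neg at hno
      exact hβx (fun w hw => hno w hw)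
    obtain ⟨z, hzadj, hzcol⟩ := hex
    obtain ⟨j, hj1, hjk, hzY⟩ := hmax z β hzadj hzcol hβk
    subst hzY
    have hcjβ : c j = β := by
      have h := hfan.2.2.2.1 j hj1 hjk
      rw [hzcol] at h
      exact (Option.some_inj.mp h).symm
    have hβj1 : β ∈ missingColors G Δ φ (Y (j - 1)) := hcjβ ▸ hfan.2.2.2.2 j hj1 hjk
    have hd2 := abSub_deg2 (α := α) (β := β) hφ
    have hd1x := abSub_deg1 (α := α) (β := β) hφ (Or.inl hαx)
    have hciα : ∀ i, 1 ≤ i → i ≤ k → c i ≠ α := by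
      intro i h1 h2 he
      exact hαx (Y i) (hfan.1 i h2) (by rw [hfan.2.2.2.1 i h1 h2, he])
    have hciβ : ∀ i, 1 ≤ i → i ≤ k → i ≠ j → c i ≠ β := by
      intro i h1 h2 hij he
      have hYij : Y i = Y j := same_color_eq hφ (by rw [hfan.2.2.2.1 i h1 h2, he]) hzcol
      exact hij (hfan.2.1 i h2 j hjk hYij)
    have hunch : ∀ i, 1 ≤ i → i ≤ k → i ≠ j →
        kflip G Δ φ α β x s(x, Y i) = φ s(x, Y i) := by
      intro i h1 h2 hij
      apply kflip_unchanged_edge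
      · rw [hfan.2.2.2.1 i h1 h2]
        exact fun h => hciα i h1 h2 (Option.some_inj.mp h)
      · rw [hfan.2.2.2.1 i h1 h2]
        exact fun h => hciβ i h1 h2 hij (Option.some_inj.mp h)
    have hflipdiff : ∀ f, kflip G Δ φ α β x f ≠ φ f →
        ∃ a b, f = s(a, b) ∧ (colG G φ s(x, y)).Adj a b ∧
          (colG G φ s(x, y)).Reachable x a ∧ (colG G φ s(x, y)).Reachable x b := by
      intro f hne
      obtain ⟨hE, v, hv, hr⟩ := kflip_diff hne
      obtain ⟨w, rfl⟩ := mem_sym2_exists hv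
      have hAdj : (abSub G Δ φ α β).Adj v w := (abSub G Δ φ α β).mem_edgeSet.mp hE
      have hle : abSub G Δ φ α β ≤ colG G φ s(x, y) := abSub_le_colG
      exact ⟨v, w, rfl, hle hAdj, hr.mono hle, (hr.trans hAdj.reachable).mono hle⟩
    by_cases hreach : (abSub G Δ φ α β).Reachable x (Y (j - 1))
    · -- the chain through x reaches Y (j-1); then it misses Y k
      have hd1j := abSub_deg1 (α := α) (β := β) hφ (Or.inr hβj1)
      have hd1k := abSub_deg1 (α := α) (β := β) hφ (Or.inr hβk)
      have hxj : x ≠ Y (j - 1) := (hfan.1 (j - 1) (by omega)).ne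
      have hxk : x ≠ Y k := (hfan.1 k le_rfl).ne
      have hjk' : Y (j - 1) ≠ Y k := by
        intro he
        have := hfan.2.1 (j - 1) (by omega) k le_rfl he
        omega
      have hnk : ¬ (abSub G Δ φ α β).Reachable x (Y k) := fun h =>
        three_ends_false (abSub G Δ φ α β) hd2 hd1x hd1j hd1k hxj hxk hjk' hreach h
      have hfan₁ : IsFan G Δ (kflip G Δ φ α β x) x Y
          (fun i => if i = j then α else c i) k := by
        refine ⟨hfan.1, hfan.2.1, kflip_none hfan.2.2.1, ?_, ?_⟩
        · intro i h1 h2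
          by_cases hij : i = j
          · subst hij
            have hcond : s(x, Y i) ∈ (abSub G Δ φ α β).edgeSet ∧
                ∃ v ∈ s(x, Y i), (abSub G Δ φ α β).Reachable x v :=
              ⟨(abSub G Δ φ α β).mem_edgeSet.mpr ⟨hfan.1 i h2, Or.inr hzcol⟩,
                x, Sym2.mem_mk_left _ _, SimpleGraph.Reachable.refl x⟩
            rw [kflip_pos hcond, hzcol, swapc_some_beta]
            simp
          · rw [hunch i h1 h2 hij, hfan.2.2.2.1 i h1 h2]
            simp [hij]
        · intro i h1 h2
          by_cases hij : i = j
          · subst hij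
            simpa using kflip_missing_ba hreach hβj1
          · simpa [hij] using kflip_missing_other (hciα i h1 h2) (hciβ i h1 h2 hij)
              (hfan.2.2.2.2 i h1 h2)
      exact main (kflip G Δ φ α β x) (fun i => if i = j then α else c i) k
        (kflip_proper hφ) hfan₁
        (kflip_missing_ab (SimpleGraph.Reachable.refl x) hαx)
        (kflip_missing_far hnk hβk)
        (fun f => kflip_isSome f) hflipdiff
    · -- the chain through x misses Y (j-1)
      have hfan₁ : IsFan G Δ (kflip G Δ φ α β x) x Y c (j - 1) := by
        refine ⟨fun i hi => hfan.1 i (by omega),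
          fun i hi j' hj' he => hfan.2.1 i (by omega) j' (by omega) he,
          kflip_none hfan.2.2.1, ?_, ?_⟩
        · intro i h1 h2
          rw [hunch i h1 (by omega) (by omega)]
          exact hfan.2.2.2.1 i h1 (by omega)
        · intro i h1 h2
          exact kflip_missing_other (hciα i h1 (by omega)) (hciβ i h1 (by omega) (by omega))
            (hfan.2.2.2.2 i h1 (by omega))
      exact main (kflip G Δ φ α β x) c (j - 1) (kflip_proper hφ) hfan₁
        (kflip_missing_ab (SimpleGraph.Reachable.refl x) hαx)
        (kflip_missing_far hreach hβj1)
        (fun f => kflip_isSome f) hflipdiff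


/-! #### Completing a partial coloring -/

lemma extend_all [Fintype V] (G : SimpleGraph V) [DecidableRel G.Adj] (Δ : ℕ)
    (hΔ : G.maxDegree ≤ Δ) :
    ∀ (n : ℕ) (φ : Sym2 V → Option (Fin (Δ + 1))), IsProperPartial G Δ φ →
      (G.edgeFinset.filter (fun f => φ f = none)).card ≤ n →
      ∃ ψ, IsProperPartial G Δ ψ ∧ ∀ f ∈ G.edgeSet, (ψ f).isSome := by
  intro n
  induction n with
  | zero =>
    intro φ hφ hcard
    refine ⟨φ, hφ, fun f hf => ?_⟩
    by_contra hnone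
    rw [Option.not_isSome_iff_eq_none] at hnone
    have hmem : f ∈ G.edgeFinset.filter (fun f => φ f = none) :=
      Finset.mem_filter.mpr ⟨SimpleGraph.mem_edgeFinset.mpr hf, hnone⟩
    have := Finset.card_pos.mpr ⟨f, hmem⟩
    omega
  | succ n ih =>
    intro φ hφ hcard
    by_cases hemp : (G.edgeFinset.filter (fun f => φ f = none)) = ∅
    · refine ⟨φ, hφ, fun f hf => ?_⟩
      by_contra hnone
      rw [Option.not_isSome_iff_eq_none] at hnone
      have hmem : f ∈ G.edgeFinset.filter (fun f => φ f = none) :=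
        Finset.mem_filter.mpr ⟨SimpleGraph.mem_edgeFinset.mpr hf, hnone⟩
      rw [hemp] at hmem
      simp at hmem
    · obtain ⟨f, hf⟩ := Finset.nonempty_iff_ne_empty.mpr hemp
      have hfE : f ∈ G.edgeSet := SimpleGraph.mem_edgeFinset.mp (Finset.mem_filter.mp hf).1
      have hfnone : φ f = none := (Finset.mem_filter.mp hf).2
      clear hf
      revert hfE hfnone
      induction f using Sym2.ind with
      | _ a b =>
        intro hfE hfnone
        have hab : G.Adj a b := G.mem_edgeSet.mp hfE
        obtain ⟨ψ, hψ, hdom, _⟩ := vizing_step G Δ hΔ φ hφ a b hab hfnone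
        apply ih ψ hψ
        have hsub : (G.edgeFinset.filter (fun g => ψ g = none)) ⊆
            (G.edgeFinset.filter (fun g => φ g = none)).erase s(a, b) := by
          intro g hg
          obtain ⟨hgE, hgnone⟩ := Finset.mem_filter.mp hg
          have hcon : ¬ ((φ g).isSome ∨ g = s(a, b)) := by
            rw [← hdom g]
            simp [hgnone]
          push_neg at hcon
          exact Finset.mem_erase.mpr ⟨hcon.2,
            Finset.mem_filter.mpr ⟨hgE, Option.not_isSome_iff_eq_none.mp hcon.1⟩⟩
        have h1 := Finset.card_le_card hsub
        have hmem : s(a, b) ∈ G.edgeFinset.filter (fun g => φ g = none) :=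
          Finset.mem_filter.mpr ⟨SimpleGraph.mem_edgeFinset.mpr hfE, hfnone⟩
        have h2 := Finset.card_erase_of_mem hmem
        have h3 := Finset.card_pos.mpr ⟨s(a, b), hmem⟩
        omega

end VizingAux






/-- Vizing extension: every uncolored edge `e` of a proper partial
`(Δ+1)`-edge-coloring lies in a connected subgraph `H ⊆ G` whose only uncolored edge is
`e` and over which `φ` extends: there is a proper partial coloring with domain
`dom(φ) ∪ E(H)` agreeing with `φ` off `E(H)`. In particular `G` has a proper
`(Δ+1)`-edge-coloring. -/
theorem vizing_extension [Fintype V] (G : SimpleGraph V) [DecidableRel G.Adj] (Δ : ℕ)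
    (hΔ : G.maxDegree ≤ Δ) (φ : Sym2 V → Option (Fin (Δ + 1)))
    (hφ : IsProperPartial G Δ φ)
    (x y : V) (hadj : G.Adj x y) (hunc : φ s(x, y) = none) :
    (∃ H : G.Subgraph, H.Connected ∧ s(x, y) ∈ H.edgeSet ∧
      (∀ f ∈ H.edgeSet, φ f = none → f = s(x, y)) ∧
      ∃ ψ : Sym2 V → Option (Fin (Δ + 1)), IsProperPartial G Δ ψ ∧
        (∀ f, (ψ f).isSome ↔ ((φ f).isSome ∨ f ∈ H.edgeSet)) ∧
        ∀ f ∉ H.edgeSet, ψ f = φ f) ∧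
    (∃ c : Sym2 V → Option (Fin (Δ + 1)), IsProperPartial G Δ c ∧
      ∀ f ∈ G.edgeSet, (c f).isSome) := by
  classical
  constructor
  · obtain ⟨ψ, hψ, hdom, hdiff⟩ := vizing_step G Δ hΔ φ hφ x y hadj hunc
    set CG := colG G φ s(x, y) with hCG
    let H : G.Subgraph :=
      { verts := {v | CG.Reachable x v}
        Adj := fun a b => CG.Adj a b ∧ CG.Reachable x a ∧ CG.Reachable x b
        adj_sub := fun h => h.1.1
        edge_vert := fun h => h.2.1
        symm := ⟨fun _ _ h => ⟨h.1.symm, h.2.2, h.2.1⟩⟩ }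
    have hexy : CG.Adj x y := ⟨hadj, Or.inr rfl⟩
    have hein : s(x, y) ∈ H.edgeSet :=
      SimpleGraph.Subgraph.mem_edgeSet.mpr ⟨hexy, SimpleGraph.Reachable.refl x, hexy.reachable⟩
    have honly : ∀ f, f ∈ H.edgeSet → ((φ f).isSome ∨ f = s(x, y)) := by
      intro f hf
      revert hf
      induction f using Sym2.ind with
      | _ a b =>
        intro hf
        exact (SimpleGraph.Subgraph.mem_edgeSet.mp hf).1.2
    refine ⟨H, ?_, hein, ?_, ψ, hψ, ?_, ?_⟩
    · rw [SimpleGraph.Subgraph.connected_iff]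
      have key : ∀ (a b : V) (w : CG.Walk a b) (ha : CG.Reachable x a)
          (hb : CG.Reachable x b), H.coe.Reachable ⟨a, ha⟩ ⟨b, hb⟩ := by
        intro a b w
        induction w with
        | nil =>
          intro ha hb
          exact SimpleGraph.Reachable.refl _
        | cons hadj' w' ih =>
          rename_i u v w''
          intro ha hb
          have hv : CG.Reachable x v := ha.trans hadj'.reachable
          have hstep : H.coe.Adj ⟨u, ha⟩ ⟨v, hv⟩ := by
            rw [SimpleGraph.Subgraph.coe_adj]
            exact ⟨hadj', ha, hv⟩
          exact hstep.reachable.trans (ih hv hb)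
      refine ⟨⟨?_⟩, ⟨x, SimpleGraph.Reachable.refl x⟩⟩
      intro u v
      obtain ⟨a, ha⟩ := u
      obtain ⟨b, hb⟩ := v
      have ra : CG.Reachable x a := ha
      have rb : CG.Reachable x b := hb
      obtain ⟨wa⟩ := ra
      obtain ⟨wb⟩ := rb
      exact ((key x a wa (SimpleGraph.Reachable.refl x) ha).symm).trans
        (key x b wb (SimpleGraph.Reachable.refl x) hb)
    · intro f hf hnone
      rcases honly f hf with h | h
      · rw [hnone] at h; simp at h
      · exact h
    · intro f
      rw [hdom f]
      constructor
      · rintro (h | rfl)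
        · exact Or.inl h
        · exact Or.inr hein
      · rintro (h | hf)
        · exact Or.inl h
        · exact honly f hf
    · intro f hf
      by_contra hne
      obtain ⟨a, b, rfl, hA, ra, rb⟩ := hdiff f hne
      exact hf (SimpleGraph.Subgraph.mem_edgeSet.mpr ⟨hA, ra, rb⟩)
  · exact extend_all G Δ hΔ (G.edgeFinset.filter (fun f => φ f = none)).card φ hφ le_rfl
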